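/- Let v be a flow on a locally compact Hausdorff space X and let x be a point with x ∈ α(x) ∪ ω(x) whose orbit O(x) is not closed. Then the derived set closure(O(x)) \ O(x) is not closed. (Key step: if closure(O(x)) \ O(x) were closed, then O(x) would be an open subset of the Baire space closure(O(x)), hence Baire, and the open dense sets U_n = {v(t,x) : t ∉ [n, n+1]} would have dense intersection, a contradiction.) -/

import Mathlib

open Set Topology

private theorem key10 {X : Type*} [TopologicalSpace X] [T2Space X] [LocallyCompactSpace X]
    (v : ℝ → X → X)
    (hc : Continuous fun p : ℝ × X => v p.1 p.2)
    (h0 : ∀ x : X, v 0 x = x)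
    (hadd : ∀ s t : ℝ, ∀ x : X, v s (v t x) = v (s + t) x)
    (x : X)
    (hrec : x ∈ ⋂ n : ℝ, closure ((fun t => v t x) '' Set.Ioi n))
    (hnc : ¬ IsClosed (Set.range fun t => v t x)) :
    ¬ IsClosed (closure (Set.range fun t => v t x) \ Set.range fun t => v t x) := by
  set f : ℝ → X := fun t => v t x with hf_def
  have hf : Continuous f := hc.comp (continuous_id.prodMk continuous_const)
  set O : Set X := Set.range f with hO_def
  intro hD
  -- every orbit point is in the closure of every forward tail
  have hA : ∀ s M : ℝ, f s ∈ closure (f '' Set.Ioi M) := by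
    intro s M
    have hx : x ∈ closure (f '' Set.Ioi (M - s)) := Set.mem_iInter.1 hrec (M - s)
    have hg : Continuous (v s) := hc.comp (continuous_const.prodMk continuous_id)
    have h1 : v s x ∈ v s '' closure (f '' Set.Ioi (M - s)) := ⟨x, hx, rfl⟩
    have h2 := (image_closure_subset_closure_image hg) h1
    refine closure_mono ?_ h2
    rintro _ ⟨_, ⟨t, ht, rfl⟩, rfl⟩
    exact ⟨s + t, by simp only [Set.mem_Ioi] at ht ⊢; linarith, (hadd s t x).symm⟩
  -- a period would make the orbit compact, hence closed: contradiction
  have hper : ∀ q : ℝ, 0 < q → v q x = x → False := by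
    intro q hq0 hq
    have hnq : v (-q) x = x := by
      calc v (-q) x = v (-q) (v q x) := by rw [hq]
      _ = v 0 x := by rw [hadd, neg_add_cancel]
      _ = x := h0 x
    have hz : ∀ k : ℤ, v (q * k) x = x := by
      intro k
      induction k using Int.induction_on with
      | zero => simpa using h0 x
      | succ k ih =>
        push_cast at ih ⊢
        rw [show q * ((k : ℝ) + 1) = q + q * k by ring, ← hadd, ih, hq]
      | pred k ih =>
        push_cast at ih ⊢
        rw [show q * (-(k : ℝ) - 1) = -q + q * (-(k : ℝ)) by ring, ← hadd, ih, hnq]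
    have himg : Set.range f = f '' Set.Icc 0 q := by
      apply Set.Subset.antisymm
      · rintro _ ⟨s, rfl⟩
        set k : ℤ := ⌊s / q⌋ with hk
        have hk1 : (k : ℝ) * q ≤ s := by
          rw [← le_div_iff₀ hq0]; exact Int.floor_le _
        have hk2 : s < ((k : ℝ) + 1) * q := by
          rw [← div_lt_iff₀ hq0]; exact Int.lt_floor_add_one _
        refine ⟨s - q * k, ⟨by nlinarith, by nlinarith⟩, ?_⟩
        show v (s - q * k) x = v s x
        calc v (s - q * k) x = v (s - q * k) (v (q * k) x) := by rw [hz k]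
        _ = v (s - q * k + q * k) x := hadd _ _ _
        _ = v s x := by ring_nf
      · rintro _ ⟨s, _, rfl⟩; exact ⟨s, rfl⟩
    apply hnc
    rw [hO_def, himg]
    exact (isCompact_Icc.image hf).isClosed
  -- Baire category argument on C = closure O
  set C : Set X := closure O with hC_def
  haveI : LocallyCompactSpace C := isClosed_closure.locallyCompactSpace
  haveI : Nonempty C := ⟨⟨x, subset_closure ⟨0, h0 x⟩⟩⟩
  set F : Option ℤ → Set C := fun i =>
    i.elim (Subtype.val ⁻¹' (C \ O))
      (fun n => Subtype.val ⁻¹' (f '' Set.Icc (n : ℝ) ((n : ℝ) + 1))) with hF_def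
  have hFc : ∀ i, IsClosed (F i) := by
    rintro (_ | n)
    · exact hD.preimage continuous_subtype_val
    · exact ((isCompact_Icc.image hf).isClosed).preimage continuous_subtype_val
  have hFU : ⋃ i, F i = Set.univ := by
    ext y
    simp only [Set.mem_iUnion, Set.mem_univ, iff_true]
    by_cases hy : (y : X) ∈ O
    · obtain ⟨t, ht⟩ := hy
      exact ⟨some ⌊t⌋, t,
        ⟨Int.floor_le t, by linarith [Int.lt_floor_add_one t]⟩, ht⟩
    · exact ⟨none, ⟨y.2, hy⟩⟩
  obtain ⟨i, y, hy⟩ := nonempty_interior_of_iUnion_of_closed hFc hFU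
  obtain ⟨W, hWo, hWeq⟩ := isOpen_induced_iff.1 (isOpen_interior (s := F i))
  have hyW : (y : X) ∈ W := by
    have : y ∈ Subtype.val ⁻¹' W := by rw [hWeq]; exact hy
    exact this
  have hmemW : ∀ t : ℝ, f t ∈ W → (⟨f t, subset_closure ⟨t, rfl⟩⟩ : C) ∈ F i := by
    intro t htW
    have : (⟨f t, subset_closure ⟨t, rfl⟩⟩ : C) ∈ Subtype.val ⁻¹' W := htW
    rw [hWeq] at this
    exact interior_subset this
  have hyC : (y : X) ∈ closure O := y.2
  obtain ⟨z, hzW, s0, rfl⟩ := mem_closure_iff.1 hyC W hWo hyW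
  rcases i with _ | n
  · exact (hmemW s0 hzW).2 ⟨s0, rfl⟩
  · -- f s0 ∈ W; use recurrence to find t > n+1 with f t ∈ W
    obtain ⟨z', hz'W, t, ht, rfl⟩ :=
      mem_closure_iff.1 (hA s0 ((n : ℝ) + 1)) W hWo hzW
    obtain ⟨u, hu, huv⟩ := hmemW t hz'W
    simp only [Set.mem_Ioi] at ht
    have hut : u < t := lt_of_le_of_lt hu.2 ht
    refine hper (t - u) (by linarith) ?_
    calc v (t - u) x = v (-u + t) x := by ring_nf
    _ = v (-u) (v t x) := (hadd _ _ _).symm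
    _ = v (-u) (v u x) := by rw [show v t x = v u x from huv.symm]
    _ = v (-u + u) x := hadd _ _ _
    _ = x := by rw [neg_add_cancel, h0]

theorem stmt_10 {X : Type*} [TopologicalSpace X] [T2Space X] [LocallyCompactSpace X]
    (v : ℝ → X → X)
    (hc : Continuous fun p : ℝ × X => v p.1 p.2)
    (h0 : ∀ x : X, v 0 x = x)
    (hadd : ∀ s t : ℝ, ∀ x : X, v s (v t x) = v (s + t) x)
    (x : X)
    (hrec : x ∈ (⋂ n : ℝ, closure ((fun t => v t x) '' Set.Iio n)) ∪
        ⋂ n : ℝ, closure ((fun t => v t x) '' Set.Ioi n))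
    (hnc : ¬ IsClosed (Set.range fun t => v t x)) :
    ¬ IsClosed (closure (Set.range fun t => v t x) \ Set.range fun t => v t x) := by
  rcases hrec with hα | hω
  · -- time-reversed flow
    have hrange : (Set.range fun t => v (-t) x) = Set.range fun t => v t x := by
      ext z; constructor
      · rintro ⟨t, rfl⟩; exact ⟨-t, rfl⟩
      · rintro ⟨t, rfl⟩; exact ⟨-t, by simp⟩
    have hrec' : x ∈ ⋂ n : ℝ, closure ((fun t => v (-t) x) '' Set.Ioi n) := by
      rw [Set.mem_iInter]; intro n
      have h1 := Set.mem_iInter.1 hα (-n)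
      have himg : ((fun t => v (-t) x) '' Set.Ioi n) = (fun t => v t x) '' Set.Iio (-n) := by
        ext z; constructor
        · rintro ⟨t, ht, rfl⟩
          exact ⟨-t, by simp only [Set.mem_Ioi] at ht; simp only [Set.mem_Iio]; linarith, rfl⟩
        · rintro ⟨t, ht, rfl⟩
          exact ⟨-t, by simp only [Set.mem_Iio] at ht; simp only [Set.mem_Ioi]; linarith,
            by show v (- -t) x = v t x; rw [neg_neg]⟩
      rw [himg]; exact h1
    have hkey := key10 (fun t y => v (-t) y)
      (hc.comp ((continuous_fst.neg).prodMk continuous_snd))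
      (fun y => by simp [h0])
      (fun s t y => by show v (-s) (v (-t) y) = v (-(s + t)) y; rw [hadd, show -s + -t = -(s + t) by ring])
      x hrec' (by simpa only [hrange] using hnc)
    simpa only [hrange] using hkey
  · exact key10 v hc h0 hadd x hω hnc
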